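/- Let 0 < z_l < z_r < 1 and β₂ ∈ ((1−z_l)/(z_r−z_l), 1/(z_r−z_l)]. Define f : [0,1] → [0,1] by f(x) = x/z_l for x ∈ [0, z_l), f(x) = 1 − β₂(x − z_l) for x ∈ [z_l, z_r), and f(x) = 1 − β₂(z_r − z_l)(1 − (x − z_r)/(1 − z_r)) for x ∈ [z_r, 1]. Then f is a well-defined continuous self-map of [0,1] with f(0) = 0, f(1) = 1, f(z_l) = 1, f(z_r) ∈ [0, z_l), and there exists a point x ∈ (z_l, z_r) with f(x) < x < f(f(f(x))). -/

import Mathlib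

theorem stmt_16 (zl zr β₂ : ℝ)
    (h0 : 0 < zl) (hlr : zl < zr) (h1 : zr < 1)
    (hβ₂ : β₂ ∈ Set.Ioc ((1 - zl)/(zr - zl)) (1/(zr - zl)))
    (f : ℝ → ℝ)
    (hf : ∀ x, f x = if x < zl then x / zl
      else if x < zr then 1 - β₂ * (x - zl)
      else 1 - β₂ * (zr - zl) * (1 - (x - zr)/(1 - zr))) :
    ContinuousOn f (Set.Icc 0 1) ∧ Set.MapsTo f (Set.Icc 0 1) (Set.Icc 0 1) ∧
    f 0 = 0 ∧ f 1 = 1 ∧ f zl = 1 ∧ f zr ∈ Set.Ico 0 zl ∧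
    ∃ x ∈ Set.Ioo zl zr, f x < x ∧ x < f (f (f x)) := by
  obtain ⟨hβl, hβu⟩ := hβ₂
  have hz : (0:ℝ) < zr - zl := by linarith
  have h1z : (0:ℝ) < 1 - zr := by linarith
  have h1l : (0:ℝ) < 1 - zl := by linarith
  have hβpos : 0 < β₂ := lt_trans (div_pos h1l hz) hβl
  have hβu' : β₂ * (zr - zl) ≤ 1 := by
    rw [le_div_iff₀ hz] at hβu
    exact hβu
  have hβl' : 1 - zl < β₂ * (zr - zl) := by
    rw [div_lt_iff₀ hz] at hβl; linarith
  -- continuity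
  have hcont : Continuous f := by
    have heq : f = fun x => if zl ≤ x then
        (if zr ≤ x then 1 - β₂ * (zr - zl) * (1 - (x - zr)/(1 - zr))
         else 1 - β₂ * (x - zl)) else x / zl := by
      funext x
      rw [hf]
      rcases lt_or_ge x zl with h | h
      · rw [if_pos h, if_neg (not_le.2 h)]
      · rw [if_neg (not_lt.2 h), if_pos h]
        rcases lt_or_ge x zr with h2 | h2
        · rw [if_pos h2, if_neg (not_le.2 h2)]
        · rw [if_neg (not_lt.2 h2), if_pos h2]
    rw [heq]
    apply Continuous.if_le
    · apply Continuous.if_le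
      · continuity
      · continuity
      · exact continuous_const
      · exact continuous_id
      · intro x hx
        rw [← hx]
        field_simp
        ring
    · exact continuous_id.div_const zl
    · exact continuous_const
    · exact continuous_id
    · intro x hx
      rw [← hx, if_neg (not_le.2 hlr)]
      field_simp
      ring
  refine ⟨hcont.continuousOn, ?_, ?_, ?_, ?_, ?_, ?_⟩
  · intro x hx
    obtain ⟨hx0, hx1⟩ := hx
    rw [hf]
    rcases lt_or_ge x zl with h | h
    · rw [if_pos h]
      constructor
      · positivity
      · rw [div_le_one h0]; linarith
    · rw [if_neg (not_lt.2 h)]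
      rcases lt_or_ge x zr with h2 | h2
      · rw [if_pos h2]
        constructor
        · nlinarith
        · nlinarith
      · rw [if_neg (not_lt.2 h2)]
        have hu0 : 0 ≤ (x - zr)/(1 - zr) := div_nonneg (by linarith) h1z.le
        have hu1 : (x - zr)/(1 - zr) ≤ 1 := by
          rw [div_le_one h1z]; linarith
        constructor
        · nlinarith
        · nlinarith
  · rw [hf, if_pos h0, zero_div]
  · rw [hf, if_neg (by linarith : ¬ (1:ℝ) < zl), if_neg (by linarith : ¬ (1:ℝ) < zr)]
    field_simp
    ring
  · rw [hf, if_neg (lt_irrefl zl), if_pos hlr]; ring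
  · rw [hf, if_neg (by linarith : ¬ zr < zl), if_neg (lt_irrefl zr)]
    constructor
    · simp only [sub_self, zero_div, sub_zero, mul_one]
      linarith
    · simp only [sub_self, zero_div, sub_zero, mul_one]
      linarith
  · have hd : 0 < (1 - zl)/β₂ := div_pos h1l hβpos
    have hxlt : zl + (1 - zl)/β₂ < zr := by
      have : (1 - zl)/β₂ < zr - zl := by
        rw [div_lt_iff₀ hβpos]; nlinarith
      linarith
    have hfx : f (zl + (1 - zl)/β₂) = zl := by
      rw [hf, if_neg (by linarith : ¬ zl + (1 - zl)/β₂ < zl), if_pos hxlt]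
      field_simp
      ring
    have hfzl : f zl = 1 := by
      rw [hf, if_neg (lt_irrefl zl), if_pos hlr]; ring
    have hf1 : f 1 = 1 := by
      rw [hf, if_neg (by linarith : ¬ (1:ℝ) < zl), if_neg (by linarith : ¬ (1:ℝ) < zr)]
      field_simp
      ring
    refine ⟨zl + (1 - zl)/β₂, ⟨by linarith, hxlt⟩, by rw [hfx]; linarith, ?_⟩
    rw [hfx, hfzl, hf1]
    linarith
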